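/- Let G be a transitive permutation group on a finite set Ω and α ∈ Ω. Then G is pre-primitive if and only if every subgroup H of G containing the point stabiliser G_α has the form H = N·G_α for some normal subgroup N of G. -/

import Mathlib

open Equiv Pointwise

variable {Ω : Type*}

/-- `G` is a transitive permutation group on `Ω`. -/
def IsTransitive (G : Subgroup (Perm Ω)) : Prop :=
  ∀ x y : Ω, ∃ g ∈ G, g x = y

/-- The partition (setoid) `r` of `Ω` is `G`-invariant. -/
def IsInvariantPartition (G : Subgroup (Perm Ω)) (r : Setoid Ω) : Prop :=
  ∀ g ∈ G, ∀ x y : Ω, r.r x y → r.r (g x) (g y)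

/-- The partition `r` of `Ω` is the orbit partition of the permutation group `H`. -/
def IsOrbitPartition (H : Subgroup (Perm Ω)) (r : Setoid Ω) : Prop :=
  ∀ x y : Ω, r.r x y ↔ ∃ h ∈ H, h x = y

/-- `G` is pre-primitive: every `G`-invariant partition is the orbit partition
of a subgroup of `G`. -/
def IsPrePrimitive (G : Subgroup (Perm Ω)) : Prop :=
  ∀ r : Setoid Ω, IsInvariantPartition G r → ∃ H ≤ G, IsOrbitPartition H r

/-- `N` is a normal subgroup of the permutation group `G`. -/
def IsNormalIn (N G : Subgroup (Perm Ω)) : Prop :=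
  N ≤ G ∧ ∀ g ∈ G, ∀ n ∈ N, g * n * g⁻¹ ∈ N


theorem Equiv.Perm.inv_apply_self {β : Type*} (f : Perm β) (x : β) : f⁻¹ (f x) = x :=
  f.symm_apply_apply x

theorem Equiv.Perm.apply_inv_self {β : Type*} (f : Perm β) (x : β) : f (f⁻¹ x) = x :=
  f.apply_symm_apply x


theorem preprimitive_iff_overgroups_of_stabilizer
    {Ω : Type*} [Fintype Ω] (G : Subgroup (Perm Ω)) (hG : IsTransitive G) (α : Ω) :
    IsPrePrimitive G ↔
      ∀ H : Subgroup (Perm Ω),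
        G ⊓ MulAction.stabilizer (Perm Ω) α ≤ H → H ≤ G →
        ∃ N : Subgroup (Perm Ω), IsNormalIn N G ∧
          (H : Set (Perm Ω)) =
            (N : Set (Perm Ω)) * ((G ⊓ MulAction.stabilizer (Perm Ω) α) : Set (Perm Ω)) := by
  constructor
  · intro hpp H hSH hHG
    -- key : two elements of G mapping α to the same point differ by an element of H
    have key : ∀ g1 ∈ G, ∀ g2 ∈ G, g1 α = g2 α → g1⁻¹ * g2 ∈ H := by
      intro g1 hg1 g2 hg2 hEq
      apply hSH
      refine Subgroup.mem_inf.mpr ⟨mul_mem (inv_mem hg1) hg2, ?_⟩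
      rw [MulAction.mem_stabilizer_iff, Perm.smul_def, Perm.mul_apply, ← hEq,
        Perm.inv_apply_self]
    set rel : Ω → Ω → Prop :=
      fun x y => ∃ g1 ∈ G, ∃ g2 ∈ G, g1 α = x ∧ g2 α = y ∧ g1⁻¹ * g2 ∈ H with hrel
    have hrefl : ∀ x, rel x x := by
      intro x
      obtain ⟨g, hg, hgx⟩ := hG α x
      exact ⟨g, hg, g, hg, hgx, hgx, by simpa using H.one_mem⟩
    have hsymm : ∀ {x y}, rel x y → rel y x := by
      rintro x y ⟨g1, hg1, g2, hg2, h1, h2, h12⟩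
      exact ⟨g2, hg2, g1, hg1, h2, h1, by simpa using H.inv_mem h12⟩
    have htrans : ∀ {x y z}, rel x y → rel y z → rel x z := by
      rintro x y z ⟨g1, hg1, g2, hg2, h1, h2, h12⟩ ⟨g3, hg3, g4, hg4, h3, h4, h34⟩
      refine ⟨g1, hg1, g4, hg4, h1, h4, ?_⟩
      have h23 : g2⁻¹ * g3 ∈ H := key g2 hg2 g3 hg3 (h2.trans h3.symm)
      have : g1⁻¹ * g4 = (g1⁻¹ * g2) * (g2⁻¹ * g3) * (g3⁻¹ * g4) := by group
      rw [this]
      exact H.mul_mem (H.mul_mem h12 h23) h34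
    set r : Setoid Ω := ⟨rel, ⟨hrefl, hsymm, htrans⟩⟩ with hr
    have hinv : IsInvariantPartition G r := by
      rintro g hg x y ⟨g1, hg1, g2, hg2, h1, h2, h12⟩
      refine ⟨g * g1, G.mul_mem hg hg1, g * g2, G.mul_mem hg hg2, ?_, ?_, ?_⟩
      · simp [Perm.mul_apply, h1]
      · simp [Perm.mul_apply, h2]
      · simpa [mul_assoc] using h12
    obtain ⟨K, hKG, hKorb⟩ := hpp r hinv
    set gens : Set (Perm Ω) := {c | ∃ g ∈ G, ∃ k ∈ K, g * k * g⁻¹ = c} with hgens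
    set N : Subgroup (Perm Ω) := Subgroup.closure gens with hN
    have hgensG : gens ⊆ (G : Set (Perm Ω)) := by
      rintro c ⟨g, hg, k, hk, rfl⟩
      exact G.mul_mem (G.mul_mem hg (hKG hk)) (G.inv_mem hg)
    have hNG : N ≤ G := (Subgroup.closure_le G).mpr hgensG
    -- every element of N preserves every class
    have nclass : ∀ n ∈ N, ∀ y : Ω, rel (n y) y := by
      intro n hn
      refine Subgroup.closure_induction (p := fun n _ => ∀ y : Ω, rel (n y) y)
        ?_ ?_ ?_ ?_ hn
      · rintro c ⟨g, hg, k, hk, rfl⟩ y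
        have h1 : rel (g⁻¹ y) (k (g⁻¹ y)) :=
          (hKorb (g⁻¹ y) (k (g⁻¹ y))).mpr ⟨k, hk, rfl⟩
        have h2 := hinv g hg _ _ h1
        have : (g : Perm Ω) (g⁻¹ y) = y := Perm.apply_inv_self g y
        rw [this] at h2
        exact hsymm (by simpa [Perm.mul_apply] using (show rel _ _ from h2))
      · intro y; simpa using hrefl y
      · intro a b _ _ ha hb y
        have := htrans (ha (b y)) (hb y)
        simpa [Perm.mul_apply] using this
      · intro a _ ha y
        have := ha (a⁻¹ y)
        rw [Perm.apply_inv_self] at this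
        exact hsymm this
    have hnormal : ∀ g ∈ G, ∀ n ∈ N, g * n * g⁻¹ ∈ N := by
      intro g hg n hn
      refine Subgroup.closure_induction (p := fun n _ => g * n * g⁻¹ ∈ N)
        ?_ ?_ ?_ ?_ hn
      · rintro c ⟨g', hg', k, hk, rfl⟩
        refine Subgroup.subset_closure ⟨g * g', G.mul_mem hg hg', k, hk, by group⟩
      · simpa using N.one_mem
      · intro a b _ _ ha hb
        have : g * (a * b) * g⁻¹ = (g * a * g⁻¹) * (g * b * g⁻¹) := by group
        rw [this]; exact N.mul_mem ha hb
      · intro a _ ha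
        have : g * a⁻¹ * g⁻¹ = (g * a * g⁻¹)⁻¹ := by group
        rw [this]; exact N.inv_mem ha
    have hNH : ∀ n ∈ N, n ∈ H := by
      intro n hn
      obtain ⟨g1, hg1, g2, hg2, h1, h2, h12⟩ := nclass n hn α
      have hg2H : g2 ∈ H := hSH (Subgroup.mem_inf.mpr ⟨hg2,
        by rw [MulAction.mem_stabilizer_iff, Perm.smul_def, h2]⟩)
      have hg1H : g1 ∈ H := by
        have : g1 = g2 * (g1⁻¹ * g2)⁻¹ := by group
        rw [this]; exact H.mul_mem hg2H (H.inv_mem h12)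
      have hx : g1⁻¹ * n ∈ H := by
        apply hSH
        refine Subgroup.mem_inf.mpr ⟨mul_mem (inv_mem hg1) (hNG hn), ?_⟩
        rw [MulAction.mem_stabilizer_iff, Perm.smul_def, Perm.mul_apply, ← h1,
          Perm.inv_apply_self]
      have : n = g1 * (g1⁻¹ * n) := by group
      rw [this]; exact H.mul_mem hg1H hx
    refine ⟨N, ⟨hNG, hnormal⟩, ?_⟩
    apply Set.Subset.antisymm
    · intro h hh
      have hhG : h ∈ G := hHG hh
      have hrαh : rel α (h α) := ⟨1, G.one_mem, h, hhG, by simp, rfl, by simpa using hh⟩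
      obtain ⟨k, hk, hkα⟩ := (hKorb α (h α)).mp hrαh
      have hkN : k ∈ N := Subgroup.subset_closure ⟨1, G.one_mem, k, hk, by group⟩
      refine Set.mem_mul.mpr ⟨k, hkN, k⁻¹ * h, ?_, by group⟩
      refine ⟨mul_mem (inv_mem (hNG hkN)) hhG, ?_⟩
      show k⁻¹ * h ∈ MulAction.stabilizer (Perm Ω) α
      rw [MulAction.mem_stabilizer_iff, Perm.smul_def, Perm.mul_apply, ← hkα,
        Perm.inv_apply_self]
    · intro x hx
      obtain ⟨n, hn, s, hs, rfl⟩ := Set.mem_mul.mp hx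
      exact H.mul_mem (hNH n hn) (hSH hs)
  · intro hyp r hinvr
    set H : Subgroup (Perm Ω) :=
      { carrier := {g | g ∈ G ∧ r.r (g α) α}
        one_mem' := ⟨G.one_mem, by simpa using r.refl α⟩
        mul_mem' := by
          rintro a b ⟨haG, ha⟩ ⟨hbG, hb⟩
          refine ⟨G.mul_mem haG hbG, ?_⟩
          have := hinvr a haG _ _ hb
          exact r.trans (by simpa [Perm.mul_apply] using this) ha
        inv_mem' := by
          rintro a ⟨haG, ha⟩
          refine ⟨G.inv_mem haG, ?_⟩
          have := hinvr a⁻¹ (G.inv_mem haG) _ _ ha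
          rw [Perm.inv_apply_self] at this
          exact r.symm this } with hH
    have hSH : G ⊓ MulAction.stabilizer (Perm Ω) α ≤ H := by
      intro s hs
      obtain ⟨hsG, hsS⟩ := Subgroup.mem_inf.mp hs
      refine ⟨hsG, ?_⟩
      rw [MulAction.mem_stabilizer_iff, Perm.smul_def] at hsS
      simpa [hsS] using r.refl α
    have hHG : H ≤ G := fun g hg => hg.1
    obtain ⟨N, ⟨hNG, hnorm⟩, hprod⟩ := hyp H hSH hHG
    have hNH : ∀ n ∈ N, n ∈ H := by
      intro n hn
      have : n ∈ (H : Set (Perm Ω)) := by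
        rw [hprod]
        exact Set.mem_mul.mpr ⟨n, hn, 1,
          Subgroup.mem_inf.mpr ⟨G.one_mem, (MulAction.stabilizer _ α).one_mem⟩, mul_one n⟩
      exact this
    refine ⟨N, hNG, ?_⟩
    intro x y
    constructor
    · intro hxy
      obtain ⟨g, hg, hgα⟩ := hG α x
      have h1 : r.r (g⁻¹ x) (g⁻¹ y) := hinvr g⁻¹ (G.inv_mem hg) _ _ hxy
      have hgx : (g⁻¹ : Perm Ω) x = α := by rw [← hgα, Perm.inv_apply_self]
      obtain ⟨k, hk, hkα⟩ := hG α ((g⁻¹ : Perm Ω) y)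
      have hkH : k ∈ H := by
        refine ⟨hk, ?_⟩
        rw [hkα]
        exact r.symm (by rwa [hgx] at h1)
      have hkset : k ∈ (H : Set (Perm Ω)) := hkH
      rw [hprod] at hkset
      obtain ⟨n, hn, s, hs, hns⟩ := Set.mem_mul.mp hkset
      have hsα : (s : Perm Ω) α = α := by
        have h2 : s ∈ MulAction.stabilizer (Perm Ω) α := hs.2
        rwa [MulAction.mem_stabilizer_iff, Perm.smul_def] at h2
      have hnα : (n : Perm Ω) α = (g⁻¹ : Perm Ω) y := by
        rw [← hkα, ← hns, Perm.mul_apply, hsα]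
      refine ⟨g * n * g⁻¹, hnorm g hg n hn, ?_⟩
      rw [Perm.mul_apply, Perm.mul_apply, hgx, hnα, Perm.apply_inv_self]
    · rintro ⟨n, hn, rfl⟩
      obtain ⟨g, hg, hgα⟩ := hG α x
      have hm : g⁻¹ * n * g ∈ N := by
        have := hnorm g⁻¹ (G.inv_mem hg) n hn
        simpa using this
      have hmH := hNH _ hm
      have := hinvr g hg _ _ hmH.2
      rw [hgα] at this
      have hx : (g : Perm Ω) ((g⁻¹ * n * g : Perm Ω) α) = n x := by
        simp [Perm.mul_apply, hgα, Perm.apply_inv_self]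
      rw [hx] at this
      exact r.symm this
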